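/- arXiv:2501.09312 — 4 statements merged into one kernel-verified Lean document; each statement's English description precedes it below -/
import Mathlib

section
/- (Theorem 2, simulation of a covariant GPOVM by a parallel strategy) For all ĝ g' : G, ‖⟪X, (((f ĝ) ⊗ₖ (1 : Matrix ι ι ℂ))ᴴ).mulVec (vec (f g'))⟫‖ ^ 2 = ‖⟪F, ((f' ĝ)ᴴ * (f' g')).mulVec ψ⟫‖ ^ 2, where ⟪·,·⟫ denotes the inner product of the corresponding EuclideanSpace (conjugate-linear in the first argument). That is, the outcome probability density at estimate ĝ of the covariant GPOVM with seed T = |X⟩⟨X| when the unknown action is g' coincides with that of the parallel covariant measurement with seed |F⟩⟨F| applied to the input state ψ evolved by f' g'. -/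
open MeasureTheory
open scoped Kronecker Matrix ComplexOrder

noncomputable section

namespace GroupEstimation

variable {G : Type} [Group G] [TopologicalSpace G] [IsTopologicalGroup G]
  [CompactSpace G] [T2Space G] [MeasurableSpace G] [BorelSpace G]
variable {Λ : Type} [Fintype Λ] [Nonempty Λ] [DecidableEq Λ]

/-- Vectorization of a square matrix. -/
def vecSq {ι : Type} (A : Matrix ι ι ℂ) : EuclideanSpace ℂ (ι × ι) :=
  WithLp.toLp 2 (fun p => A p.1 p.2)

/-- The block-diagonal representation `f` on `⊕_λ U_λ ⊗ ℂ^{n_λ}`. -/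
def bigF (d n : Λ → ℕ) (f_ : ∀ l : Λ, G → Matrix (Fin (d l)) (Fin (d l)) ℂ) (g : G) :
    Matrix (Σ l : Λ, Fin (d l) × Fin (n l)) (Σ l : Λ, Fin (d l) × Fin (n l)) ℂ :=
  Matrix.blockDiagonal' fun l => f_ l g ⊗ₖ (1 : Matrix (Fin (n l)) (Fin (n l)) ℂ)

/-- The block-diagonal representation `f'` on `⊕_λ U_λ ⊗ ℂ^{d_λ}`. -/
def bigF' (d : Λ → ℕ) (f_ : ∀ l : Λ, G → Matrix (Fin (d l)) (Fin (d l)) ℂ) (g : G) :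
    Matrix (Σ l : Λ, Fin (d l) × Fin (d l)) (Σ l : Λ, Fin (d l) × Fin (d l)) ℂ :=
  Matrix.blockDiagonal' fun l => f_ l g ⊗ₖ (1 : Matrix (Fin (d l)) (Fin (d l)) ℂ)

/-- The vector `F = ⊕_λ √(d λ) |I_λ⟩⟩`. -/
def Fvec (d : Λ → ℕ) : EuclideanSpace ℂ (Σ l : Λ, Fin (d l) × Fin (d l)) :=
  WithLp.toLp 2 (fun p => if p.2.1 = p.2.2 then (Real.sqrt (d p.1) : ℂ) else 0)

/-- The seed vector `X = ⊕_{λ,λ'} |X_{λ,λ'}⟩⟩ ⊗ |Y_{λ,λ'}⟩`. -/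
def Xvec (d n : Λ → ℕ)
    (Xm : ∀ l l' : Λ, Matrix (Fin (d l)) (Fin (d l')) ℂ)
    (Y : ∀ l l' : Λ, Fin (n l) × Fin (n l') → ℂ) :
    EuclideanSpace ℂ ((Σ l : Λ, Fin (d l) × Fin (n l)) × (Σ l : Λ, Fin (d l) × Fin (n l))) :=
  WithLp.toLp 2 (fun pq => Xm pq.1.1 pq.2.1 pq.1.2.1 pq.2.2.1 * Y pq.1.1 pq.2.1 (pq.1.2.2, pq.2.2.2))

/-- The input state `ψ[T]` of the simulating parallel strategy. -/
def psiVec (d n : Λ → ℕ)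
    (Xm : ∀ l l' : Λ, Matrix (Fin (d l)) (Fin (d l')) ℂ)
    (Y : ∀ l l' : Λ, Fin (n l) × Fin (n l') → ℂ) :
    EuclideanSpace ℂ (Σ l : Λ, Fin (d l) × Fin (d l)) :=
  WithLp.toLp 2 (fun p => ((((d p.1 : ℝ)) ^ (-(1:ℝ)/2) : ℝ) : ℂ) *
    (∑ a, star (Y p.1 p.1 (a, a))) * star (Xm p.1 p.1 p.2.2 p.2.1))

/-- The average state on the doubled system (entrywise Bochner integral). -/
def rhoMuB (μ : Measure G) (d n : Λ → ℕ)
    (f_ : ∀ l : Λ, G → Matrix (Fin (d l)) (Fin (d l)) ℂ) :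
    Matrix ((Σ l : Λ, Fin (d l) × Fin (n l)) × (Σ l : Λ, Fin (d l) × Fin (n l)))
      ((Σ l : Λ, Fin (d l) × Fin (n l)) × (Σ l : Λ, Fin (d l) × Fin (n l))) ℂ :=
  fun p q => ∫ g, bigF d n f_ g p.1 p.2 * star (bigF d n f_ g q.1 q.2) ∂μ


section Helpers

lemma sum4_comm {α β γ δ M : Type*} [Fintype α] [Fintype β] [Fintype γ] [Fintype δ]
    [AddCommMonoid M] (f : α → β → γ → δ → M) :
    (∑ a, ∑ b, ∑ c, ∑ d, f a b c d) = ∑ d, ∑ a, ∑ c, ∑ b, f a b c d :=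
  calc (∑ a, ∑ b, ∑ c, ∑ d, f a b c d)
      = ∑ a, ∑ b, ∑ d, ∑ c, f a b c d :=
        Finset.sum_congr rfl fun _ _ => Finset.sum_congr rfl fun _ _ => Finset.sum_comm
    _ = ∑ a, ∑ d, ∑ b, ∑ c, f a b c d :=
        Finset.sum_congr rfl fun _ _ => Finset.sum_comm
    _ = ∑ d, ∑ a, ∑ b, ∑ c, f a b c d := Finset.sum_comm
    _ = ∑ d, ∑ a, ∑ c, ∑ b, f a b c d :=
        Finset.sum_congr rfl fun _ _ => Finset.sum_congr rfl fun _ _ => Finset.sum_comm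

lemma sum4_comm' {α β γ δ M : Type*} [Fintype α] [Fintype β] [Fintype γ] [Fintype δ]
    [AddCommMonoid M] (f : α → β → γ → δ → M) :
    (∑ a, ∑ b, ∑ c, ∑ d, f a b c d) = ∑ d, ∑ a, ∑ b, ∑ c, f a b c d :=
  calc (∑ a, ∑ b, ∑ c, ∑ d, f a b c d)
      = ∑ a, ∑ b, ∑ d, ∑ c, f a b c d :=
        Finset.sum_congr rfl fun _ _ => Finset.sum_congr rfl fun _ _ => Finset.sum_comm
    _ = ∑ a, ∑ d, ∑ b, ∑ c, f a b c d :=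
        Finset.sum_congr rfl fun _ _ => Finset.sum_comm
    _ = ∑ d, ∑ a, ∑ b, ∑ c, f a b c d := Finset.sum_comm

lemma sum4_rot {α β γ δ M : Type*} [Fintype α] [Fintype β] [Fintype γ] [Fintype δ]
    [AddCommMonoid M] (f : α → β → γ → δ → M) :
    (∑ a, ∑ b, ∑ c, ∑ d, f a b c d) = ∑ b, ∑ c, ∑ d, ∑ a, f a b c d :=
  calc (∑ a, ∑ b, ∑ c, ∑ d, f a b c d)
      = ∑ b, ∑ a, ∑ c, ∑ d, f a b c d := Finset.sum_comm
    _ = ∑ b, ∑ c, ∑ a, ∑ d, f a b c d :=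
        Finset.sum_congr rfl fun _ _ => Finset.sum_comm
    _ = ∑ b, ∑ c, ∑ d, ∑ a, f a b c d :=
        Finset.sum_congr rfl fun _ _ => Finset.sum_congr rfl fun _ _ => Finset.sum_comm

lemma sqrt_mul_rpow_neg_half {m : ℕ} (hm : 0 < m) :
    (Real.sqrt m) * ((m : ℝ) ^ (-(1:ℝ)/2)) = 1 := by
  have hpos : (0:ℝ) < m := by exact_mod_cast hm
  rw [Real.sqrt_eq_rpow, ← Real.rpow_add hpos]
  norm_num

lemma ite_dite_swap {M : Type*} [Zero M] (c : Prop) [Decidable c] {Q : Prop} [Decidable Q]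
    (A : Q → M) : (if c then (if h : Q then A h else 0) else 0)
      = (if h : Q then (if c then A h else 0) else 0) := by
  split <;> split <;> simp_all

lemma sum_sigma_univ {ι : Type*} {κ : ι → Type*} [Fintype ι] [∀ i, Fintype (κ i)]
    {M : Type*} [AddCommMonoid M] (f : Sigma κ → M) :
    ∑ x : Sigma κ, f x = ∑ i, ∑ j, f ⟨i, j⟩ := by
  rw [← Finset.univ_sigma_univ, Finset.sum_sigma]

end Helpers

lemma lhs_inner_eq {G : Type} [Group G] {Λ : Type} [Fintype Λ] [DecidableEq Λ]
    (d n : Λ → ℕ)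
    (f_ : ∀ l : Λ, G → Matrix (Fin (d l)) (Fin (d l)) ℂ)
    (Xm : ∀ l l' : Λ, Matrix (Fin (d l)) (Fin (d l')) ℂ)
    (Y : ∀ l l' : Λ, Fin (n l) × Fin (n l') → ℂ)
    (gh g' : G) :
    (inner ℂ (Xvec d n Xm Y)
        ((WithLp.toLp 2 (((bigF d n f_ gh ⊗ₖ
              (1 : Matrix (Σ l : Λ, Fin (d l) × Fin (n l))
                (Σ l : Λ, Fin (d l) × Fin (n l)) ℂ))ᴴ).mulVec
            (WithLp.ofLp (vecSq (bigF d n f_ g')))) :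
          EuclideanSpace ℂ ((Σ l : Λ, Fin (d l) × Fin (n l)) ×
            (Σ l : Λ, Fin (d l) × Fin (n l))))) : ℂ) =
    ∑ l : Λ, (∑ a, (starRingEnd ℂ) (Y l l (a,a))) *
      ∑ k, ∑ j, ∑ k', (starRingEnd ℂ) (Xm l l j k') * (starRingEnd ℂ) (f_ l gh k j)
        * f_ l g' k k' := by
  simp only [PiLp.inner_apply, RCLike.inner_apply, Matrix.mulVec, dotProduct,
    PiLp.toLp_apply, WithLp.ofLp_toLp, Matrix.conjTranspose_apply, Matrix.kroneckerMap_apply, vecSq, Xvec, bigF,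
    Matrix.blockDiagonal'_apply, Matrix.one_apply]
  simp only [star_mul', apply_ite (star : ℂ → ℂ), apply_dite (star : ℂ → ℂ), star_zero, star_one,
    mul_ite, ite_mul, mul_zero, zero_mul, mul_one, one_mul, Fintype.sum_prod_type,
    Fintype.sum_ite_eq']
  simp only [sum_sigma_univ]
  simp only [mul_ite, ite_mul, mul_zero, zero_mul, dite_mul, mul_dite,
    Finset.sum_dite_irrel, Finset.sum_ite_irrel, Finset.sum_const_zero,
    Fintype.sum_dite_eq', Fintype.sum_dite_eq, cast_eq, Fintype.sum_ite_eq, Fintype.sum_ite_eq']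
  simp only [ite_dite_swap, mul_dite, mul_zero, Finset.sum_dite_irrel, Finset.sum_const_zero,
    Fintype.sum_dite_eq', cast_eq]
  simp only [Fintype.sum_prod_type, mul_ite, ite_mul, mul_zero, zero_mul,
    Finset.sum_ite_irrel, Finset.sum_const_zero, Fintype.sum_ite_eq, Fintype.sum_ite_eq',
    map_mul, Finset.mul_sum, Finset.sum_mul, starRingEnd_apply]
  simp only [dite_mul, zero_mul, Finset.sum_dite_irrel, Finset.sum_const_zero, Fintype.sum_dite_eq, Fintype.sum_dite_eq', cast_eq]
  simp only [Finset.sum_mul, ite_mul, zero_mul, Finset.sum_ite_irrel, Finset.sum_const_zero,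
    Fintype.sum_ite_eq', Finset.mul_sum]
  refine Finset.sum_congr rfl fun l _ => ?_
  conv_lhs => rw [sum4_comm]
  exact Finset.sum_congr rfl fun _ _ => Finset.sum_congr rfl fun _ _ =>
    Finset.sum_congr rfl fun _ _ => Finset.sum_congr rfl fun _ _ => by ring

lemma rhs_inner_eq {G : Type} [Group G] {Λ : Type} [Fintype Λ] [DecidableEq Λ]
    (d n : Λ → ℕ) (hd : ∀ l, 0 < d l)
    (f_ : ∀ l : Λ, G → Matrix (Fin (d l)) (Fin (d l)) ℂ)
    (Xm : ∀ l l' : Λ, Matrix (Fin (d l)) (Fin (d l')) ℂ)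
    (Y : ∀ l l' : Λ, Fin (n l) × Fin (n l') → ℂ)
    (gh g' : G) :
    (inner ℂ (Fvec d)
          ((WithLp.toLp 2 (((bigF' d f_ gh)ᴴ * bigF' d f_ g').mulVec (WithLp.ofLp (psiVec d n Xm Y))) :
            EuclideanSpace ℂ (Σ l : Λ, Fin (d l) × Fin (d l)))) : ℂ) =
    ∑ l : Λ, (∑ a, (starRingEnd ℂ) (Y l l (a,a))) *
      ∑ k, ∑ j, ∑ k', (starRingEnd ℂ) (Xm l l j k') * (starRingEnd ℂ) (f_ l gh k j)
        * f_ l g' k k' := by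
  simp only [PiLp.inner_apply, RCLike.inner_apply, Matrix.mulVec, dotProduct,
    PiLp.toLp_apply, WithLp.ofLp_toLp, Matrix.mul_apply, Matrix.conjTranspose_apply, Matrix.kroneckerMap_apply, Fvec, psiVec, bigF',
    Matrix.blockDiagonal'_apply, Matrix.one_apply]
  simp only [star_mul', apply_ite (star : ℂ → ℂ), apply_dite (star : ℂ → ℂ), star_zero, star_one,
    mul_ite, ite_mul, mul_zero, zero_mul, mul_one, one_mul]
  simp only [sum_sigma_univ]
  simp only [mul_ite, ite_mul, mul_zero, zero_mul, dite_mul, mul_dite,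
    Finset.sum_dite_irrel, Finset.sum_ite_irrel, Finset.sum_const_zero,
    ite_dite_swap, mul_dite, Finset.sum_dite_irrel,
    Fintype.sum_dite_eq', Fintype.sum_dite_eq, cast_eq, Fintype.sum_ite_eq, Fintype.sum_ite_eq']
  simp only [Fintype.sum_prod_type, apply_ite (starRingEnd ℂ), map_zero, Complex.conj_ofReal,
    mul_ite, ite_mul, mul_zero, zero_mul, Finset.sum_ite_irrel, Finset.sum_const_zero,
    Fintype.sum_ite_eq, Fintype.sum_ite_eq', Finset.mul_sum, Finset.sum_mul, starRingEnd_apply]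
  refine Finset.sum_congr rfl fun l _ => ?_
  conv_rhs => rw [sum4_rot]
  refine Finset.sum_congr rfl fun j _ => Finset.sum_congr rfl fun k' _ =>
    Finset.sum_congr rfl fun b _ => Finset.sum_congr rfl fun k _ => ?_
  have h1 : (star (((Real.sqrt (d l) : ℝ) : ℂ))) * ((((d l : ℝ)) ^ (-(1:ℝ)/2) : ℝ) : ℂ) = 1 := by
    rw [Complex.star_def, Complex.conj_ofReal, ← Complex.ofReal_mul,
      sqrt_mul_rpow_neg_half (hd l), Complex.ofReal_one]
  linear_combination (star (f_ l gh k j) * f_ l g' k k' * star (Y l l (b, b)) *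
    star (Xm l l j k')) * h1

/-- Theorem 2: the outcome probability density of the covariant GPOVM with seed
`T = |X⟩⟨X|` coincides with that of the standard covariant parallel measurement
applied to the input state `ψ[T]`. -/
theorem covariant_GPOVM_simulated_by_parallel
    {G : Type} [Group G] [TopologicalSpace G] [IsTopologicalGroup G]
    [CompactSpace G] [T2Space G] [MeasurableSpace G] [BorelSpace G]
    (μ : Measure G) [μ.IsHaarMeasure] [IsProbabilityMeasure μ]
    {Λ : Type} [Fintype Λ] [Nonempty Λ] [DecidableEq Λ]
    (d n : Λ → ℕ) (hd : ∀ l, 0 < d l) (hn : ∀ l, 0 < n l)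
    (f_ : ∀ l : Λ, G → Matrix (Fin (d l)) (Fin (d l)) ℂ)
    (hf_cont : ∀ l, Continuous (f_ l))
    (hf_mul : ∀ (l : Λ) (g h : G), f_ l (g * h) = f_ l g * f_ l h)
    (hf_one : ∀ l, f_ l 1 = 1)
    (hf_unit : ∀ (l : Λ) (g : G), f_ l g ∈ Matrix.unitaryGroup (Fin (d l)) ℂ)
    (hirr : ∀ (l : Λ) (p : Submodule ℂ (Fin (d l) → ℂ)),
      (∀ g : G, ∀ x ∈ p, (f_ l g).mulVec x ∈ p) → p = ⊥ ∨ p = ⊤)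
    (hdis : ∀ l l' : Λ, l ≠ l' → ¬ ∃ S : Matrix (Fin (d l')) (Fin (d l)) ℂ,
      Function.Bijective S.mulVec ∧ ∀ g : G, S * f_ l g = f_ l' g * S)
    (Xm : ∀ l l' : Λ, Matrix (Fin (d l)) (Fin (d l')) ℂ)
    (Y : ∀ l l' : Λ, Fin (n l) × Fin (n l') → ℂ)
    (gh g' : G) :
    ‖(inner ℂ (Xvec d n Xm Y)
        ((WithLp.toLp 2 (((bigF d n f_ gh ⊗ₖ
              (1 : Matrix (Σ l : Λ, Fin (d l) × Fin (n l))
                (Σ l : Λ, Fin (d l) × Fin (n l)) ℂ))ᴴ).mulVec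
            (WithLp.ofLp (vecSq (bigF d n f_ g')))) :
          EuclideanSpace ℂ ((Σ l : Λ, Fin (d l) × Fin (n l)) ×
            (Σ l : Λ, Fin (d l) × Fin (n l))))) : ℂ)‖ ^ 2 =
      ‖(inner ℂ (Fvec d)
          ((WithLp.toLp 2 (((bigF' d f_ gh)ᴴ * bigF' d f_ g').mulVec (WithLp.ofLp (psiVec d n Xm Y))) :
            EuclideanSpace ℂ (Σ l : Λ, Fin (d l) × Fin (d l)))) : ℂ)‖ ^ 2 := by
  rw [(lhs_inner_eq d n f_ Xm Y gh g').trans (rhs_inner_eq d n hd f_ Xm Y gh g').symm]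

end GroupEstimation
end
end

section
/- For every positive semidefinite matrix T indexed by Fin d × Fin d, the map M_T satisfies: M_T ∅ = 0; M_T B is positive semidefinite for every Borel set B; M_T (⋃ j, B j) = ∑' j, M_T (B j) for every countable pairwise disjoint family of Borel sets; M_T (g • B) = (A g) * (M_T B) * (A g)ᴴ for every g : G and Borel set B; and ((M_T Set.univ) * ρμ).trace = (T * ρμ).trace. In particular, M_T is a covariant GPOVM if and only if (T * ρμ).trace = 1. -/
open MeasureTheory
open scoped Kronecker Matrix ComplexOrder

noncomputable section

namespace GroupEstimation

variable {G : Type} [Group G] [TopologicalSpace G] [IsTopologicalGroup G]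
  [CompactSpace G] [T2Space G] [MeasurableSpace G] [BorelSpace G]

/-- Vectorization of a square matrix. -/
def vec {d : ℕ} (A : Matrix (Fin d) (Fin d) ℂ) : EuclideanSpace ℂ (Fin d × Fin d) :=
  WithLp.toLp 2 (fun p => A p.1 p.2)

/-- The rank-one state `|f(g)⟩⟩⟨⟨f(g)|`. -/
def rho {d : ℕ} (f : G → Matrix (Fin d) (Fin d) ℂ) (g : G) :
    Matrix (Fin d × Fin d) (Fin d × Fin d) ℂ :=
  fun p q => f g p.1 p.2 * star (f g q.1 q.2)

/-- `A g = f g ⊗ₖ 1`. -/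
def Amat {d : ℕ} (f : G → Matrix (Fin d) (Fin d) ℂ) (g : G) :
    Matrix (Fin d × Fin d) (Fin d × Fin d) ℂ :=
  f g ⊗ₖ (1 : Matrix (Fin d) (Fin d) ℂ)

/-- The average state `ρμ` (entrywise Bochner integral). -/
def rhoMu (μ : Measure G) {d : ℕ} (f : G → Matrix (Fin d) (Fin d) ℂ) :
    Matrix (Fin d × Fin d) (Fin d × Fin d) ℂ :=
  fun p q => ∫ g, rho f g p q ∂μ

/-- positivity, vanishing at ∅ and countable additivity (the "measure part" of a GPOVM). -/
def IsPreGPOVM {d : ℕ} (M : Set G → Matrix (Fin d × Fin d) (Fin d × Fin d) ℂ) : Prop :=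
  (∀ B : Set G, MeasurableSet B → (M B).PosSemidef) ∧ M ∅ = 0 ∧
    ∀ B : ℕ → Set G, (∀ j, MeasurableSet (B j)) → Pairwise (Function.onFun Disjoint B) →
      M (⋃ j, B j) = ∑' j, M (B j)

/-- Generalized POVM. -/
def IsGPOVM (μ : Measure G) {d : ℕ} (f : G → Matrix (Fin d) (Fin d) ℂ)
    (M : Set G → Matrix (Fin d × Fin d) (Fin d × Fin d) ℂ) : Prop :=
  IsPreGPOVM M ∧ (M Set.univ * rhoMu μ f).trace = 1

/-- Covariance of a GPOVM. -/
def IsCovariant {d : ℕ} (f : G → Matrix (Fin d) (Fin d) ℂ)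
    (M : Set G → Matrix (Fin d × Fin d) (Fin d × Fin d) ℂ) : Prop :=
  ∀ (g : G) (B : Set G), MeasurableSet B →
    M ((g * ·) '' B) = Amat f g * M B * (Amat f g)ᴴ

/-- The covariant GPOVM with seed `T`. -/
def MT (μ : Measure G) {d : ℕ} (f : G → Matrix (Fin d) (Fin d) ℂ)
    (T : Matrix (Fin d × Fin d) (Fin d × Fin d) ℂ) (B : Set G) :
    Matrix (Fin d × Fin d) (Fin d × Fin d) ℂ :=
  fun p q => ∫ g in B, (Amat f g * T * (Amat f g)ᴴ) p q ∂μ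

/-- Pointwise risk. -/
def Dpt {d : ℕ} (w : G → G → ℝ)
    (ν : (Set G → Matrix (Fin d × Fin d) (Fin d × Fin d) ℂ) → G → Measure G)
    (M : Set G → Matrix (Fin d × Fin d) (Fin d × Fin d) ℂ) (g : G) : ℝ :=
  ∫ gh, w g gh ∂(ν M g)

/-- Bayes risk. -/
def Dbayes (μ : Measure G) {d : ℕ} (w : G → G → ℝ)
    (ν : (Set G → Matrix (Fin d × Fin d) (Fin d × Fin d) ℂ) → G → Measure G)
    (M : Set G → Matrix (Fin d × Fin d) (Fin d × Fin d) ℂ) : ℝ :=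
  ∫ g, Dpt w ν M g ∂μ

/-- Minimax risk. -/
def Dmax {d : ℕ} (w : G → G → ℝ)
    (ν : (Set G → Matrix (Fin d × Fin d) (Fin d × Fin d) ℂ) → G → Measure G)
    (M : Set G → Matrix (Fin d × Fin d) (Fin d × Fin d) ℂ) : ℝ :=
  ⨆ g : G, Dpt w ν M g

/-- Twisted GPOVM `M_g`. -/
def twist {d : ℕ} (f : G → Matrix (Fin d) (Fin d) ℂ)
    (M : Set G → Matrix (Fin d × Fin d) (Fin d × Fin d) ℂ) (g : G) (B : Set G) :
    Matrix (Fin d × Fin d) (Fin d × Fin d) ℂ :=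
  (Amat f g)ᴴ * M ((g * ·) '' B) * Amat f g

/-- Matrix of the orthogonal projection onto span {v g}. -/
def P0 {d : ℕ} (f : G → Matrix (Fin d) (Fin d) ℂ) :
    Matrix (Fin d × Fin d) (Fin d × Fin d) ℂ :=
  Matrix.toEuclideanLin.symm
    ((Submodule.span ℂ (Set.range fun g => vec (f g))).subtype ∘ₗ
      (Submodule.orthogonalProjectionOnto (Submodule.span ℂ (Set.range fun g => vec (f g)))).toLinearMap)


section Helpers

set_option linter.unusedSectionVars false

variable {Ω : Type*} [MeasurableSpace Ω] {n : Type*} [Fintype n]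

private lemma single_int (ν : Measure Ω) (f : Ω → ℂ) (a b : ℂ) :
    ∫ g, a * f g * b ∂ν = a * (∫ g, f g ∂ν) * b := by
  simp only [mul_assoc, integral_const_mul, mul_comm _ b, ← integral_const_mul]

private lemma mul_intMatrix_mul (ν : Measure Ω) (F : Ω → Matrix n n ℂ)
    (hF : ∀ p q, Integrable (fun g => F g p q) ν) (X Y : Matrix n n ℂ) :
    X * (Matrix.of fun p q => ∫ g, F g p q ∂ν) * Y =
      Matrix.of fun p q => ∫ g, (X * F g * Y) p q ∂ν := by
  funext p q
  have h1 : ∀ g, (X * F g * Y) p q = ∑ s, ∑ r, X p r * F g r s * Y s q := by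
    intro g
    simp only [Matrix.mul_apply, Finset.sum_mul]
  have hint : ∀ s r : n, Integrable (fun g => X p r * F g r s * Y s q) ν :=
    fun s r => ((hF r s).const_mul _).mul_const _
  calc (X * (Matrix.of fun p q => ∫ g, F g p q ∂ν) * Y) p q
      = ∑ s, ∑ r, X p r * (∫ g, F g r s ∂ν) * Y s q := by
        simp only [Matrix.mul_apply, Matrix.of_apply, Finset.sum_mul]
    _ = ∑ s, ∑ r, ∫ g, X p r * F g r s * Y s q ∂ν := by
        simp only [single_int]
    _ = ∫ g, ∑ s, ∑ r, X p r * F g r s * Y s q ∂ν := by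
        rw [integral_finset_sum]
        · exact Finset.sum_congr rfl fun s _ => (integral_finset_sum _ fun r _ => hint s r).symm
        · exact fun s _ => integrable_finset_sum _ fun r _ => hint s r
    _ = ∫ g, (X * F g * Y) p q ∂ν := by simp only [h1]

private lemma dotProduct_intMatrix (ν : Measure Ω) (F : Ω → Matrix n n ℂ)
    (hF : ∀ p q, Integrable (fun g => F g p q) ν) (x : n → ℂ) :
    star x ⬝ᵥ ((Matrix.of fun p q => ∫ g, F g p q ∂ν) *ᵥ x) =
      ∫ g, star x ⬝ᵥ (F g *ᵥ x) ∂ν := by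
  have h1 : ∀ g, star x ⬝ᵥ (F g *ᵥ x) = ∑ p, ∑ q, star x p * F g p q * x q := by
    intro g
    simp only [dotProduct, Matrix.mulVec, Finset.mul_sum, mul_assoc]
  have hint : ∀ p q : n, Integrable (fun g => star x p * F g p q * x q) ν :=
    fun p q => ((hF p q).const_mul _).mul_const _
  calc star x ⬝ᵥ ((Matrix.of fun p q => ∫ g, F g p q ∂ν) *ᵥ x)
      = ∑ p, ∑ q, star x p * (∫ g, F g p q ∂ν) * x q := by
        simp only [dotProduct, Matrix.mulVec, Matrix.of_apply, Finset.mul_sum, mul_assoc]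
    _ = ∑ p, ∑ q, ∫ g, star x p * F g p q * x q ∂ν := by
        simp only [single_int]
    _ = ∫ g, ∑ p, ∑ q, star x p * F g p q * x q ∂ν := by
        rw [integral_finset_sum]
        · exact Finset.sum_congr rfl fun p _ => (integral_finset_sum _ fun q _ => hint p q).symm
        · exact fun p _ => integrable_finset_sum _ fun q _ => hint p q
    _ = ∫ g, star x ⬝ᵥ (F g *ᵥ x) ∂ν := by simp only [h1]

private lemma trace_intMatrix_mul (ν : Measure Ω) (F : Ω → Matrix n n ℂ)
    (hF : ∀ p q, Integrable (fun g => F g p q) ν) (C : Matrix n n ℂ) :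
    ((Matrix.of fun p q => ∫ g, F g p q ∂ν) * C).trace = ∫ g, (F g * C).trace ∂ν := by
  have h1 : ∀ g, (F g * C).trace = ∑ p, ∑ q, F g p q * C q p := by
    intro g
    simp [Matrix.trace, Matrix.diag, Matrix.mul_apply]
  have hint : ∀ p q : n, Integrable (fun g => F g p q * C q p) ν :=
    fun p q => (hF p q).mul_const _
  calc ((Matrix.of fun p q => ∫ g, F g p q ∂ν) * C).trace
      = ∑ p, ∑ q, (∫ g, F g p q ∂ν) * C q p := by
        simp [Matrix.trace, Matrix.diag, Matrix.mul_apply]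
    _ = ∑ p, ∑ q, ∫ g, F g p q * C q p ∂ν := by
        simp only [integral_mul_const]
    _ = ∫ g, ∑ p, ∑ q, F g p q * C q p ∂ν := by
        rw [integral_finset_sum]
        · exact Finset.sum_congr rfl fun p _ => (integral_finset_sum _ fun q _ => hint p q).symm
        · exact fun p _ => integrable_finset_sum _ fun q _ => hint p q
    _ = ∫ g, (F g * C).trace ∂ν := by simp only [h1]

private lemma conj_vecMulVec (X : Matrix n n ℂ) (u : n → ℂ) :
    X * (Matrix.of fun p q => u p * star (u q)) * Xᴴ =
      Matrix.of fun p q => (X *ᵥ u) p * star ((X *ᵥ u) q) := by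
  funext p q
  simp only [Matrix.mul_apply, Matrix.of_apply, Matrix.conjTranspose_apply, Matrix.mulVec,
    dotProduct]
  rw [star_sum, Finset.sum_mul_sum]
  simp only [Finset.sum_mul, Finset.mul_sum, star_mul']
  rw [Finset.sum_comm]
  refine Finset.sum_congr rfl fun s _ => Finset.sum_congr rfl fun r _ => by ring

private lemma integral_nonneg_complex (ν : Measure Ω) (z : Ω → ℂ)
    (hz : ∀ g, 0 ≤ z g) : 0 ≤ ∫ g, z g ∂ν := by
  have h1 : ∀ g, z g = ((z g).re : ℂ) := by
    intro g
    obtain ⟨hre, him⟩ := Complex.nonneg_iff.mp (hz g)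
    exact Complex.ext rfl him.symm
  calc (0 : ℂ) ≤ ((∫ g, (z g).re ∂ν : ℝ) : ℂ) := by
        rw [Complex.zero_le_real]
        exact integral_nonneg fun g => (Complex.nonneg_iff.mp (hz g)).1
    _ = ∫ g, ((z g).re : ℂ) ∂ν := integral_ofReal.symm
    _ = ∫ g, z g ∂ν := by simp_rw [← h1]

end Helpers

section GroupHelpers

set_option linter.unusedSectionVars false

variable {d : ℕ} {f : G → Matrix (Fin d) (Fin d) ℂ}

private lemma Amat_continuous (hf : Continuous f) : Continuous (Amat f) := by
  apply continuous_matrix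
  intro p q
  exact (hf.matrix_elem p.1 q.1).mul continuous_const

private lemma rho_continuous (hf : Continuous f) : Continuous (rho f) := by
  apply continuous_matrix
  intro p q
  exact (hf.matrix_elem p.1 p.2).mul (Complex.continuous_conj.comp (hf.matrix_elem q.1 q.2))

private lemma Amat_mulVec (f : G → Matrix (Fin d) (Fin d) ℂ) (g : G)
    (M : Matrix (Fin d) (Fin d) ℂ) :
    Amat f g *ᵥ (fun p : Fin d × Fin d => M p.1 p.2) = fun p => (f g * M) p.1 p.2 := by
  funext p
  simp [Amat, Matrix.mulVec, dotProduct, Fintype.sum_prod_type, Matrix.mul_apply,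
    Matrix.one_apply, mul_ite, ite_mul, Finset.sum_ite_eq']

private lemma Amat_mul (f : G → Matrix (Fin d) (Fin d) ℂ)
    (c : G → G → ℂ) (hc_proj : ∀ g h : G, f (g * h) = c g h • (f g * f h)) (g h : G) :
    Amat f (g * h) = c g h • (Amat f g * Amat f h) := by
  rw [Amat, hc_proj g h, Matrix.smul_kronecker]
  congr 1
  rw [show (1 : Matrix (Fin d) (Fin d) ℂ) = 1 * 1 by rw [one_mul], Matrix.mul_kronecker_mul]
  rfl

private lemma Amat_unitary (f : G → Matrix (Fin d) (Fin d) ℂ)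
    (hf_unitary : ∀ g : G, f g ∈ Matrix.unitaryGroup (Fin d) ℂ) (g : G) :
    (Amat f g)ᴴ * Amat f g = 1 ∧ Amat f g * (Amat f g)ᴴ = 1 := by
  have h1 : (f g)ᴴ * f g = 1 := Matrix.mem_unitaryGroup_iff'.mp (hf_unitary g)
  have h2 : f g * (f g)ᴴ = 1 := Matrix.mem_unitaryGroup_iff.mp (hf_unitary g)
  have hct : (Amat f g)ᴴ = (f g)ᴴ ⊗ₖ (1 : Matrix (Fin d) (Fin d) ℂ) := by
    funext p q
    simp [Amat, Matrix.conjTranspose_apply, Matrix.one_apply, apply_ite (star : ℂ → ℂ),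
      eq_comm]
  constructor <;>
  · rw [hct, Amat, ← Matrix.mul_kronecker_mul, one_mul]
    simp [h1, h2, Matrix.one_kronecker_one]

private lemma phase_cancel (c : G → G → ℂ) (hc_norm : ∀ g h : G, ‖c g h‖ = 1) (g h : G) :
    c g h * star (c g h) = 1 := by
  rw [RCLike.star_def, Complex.mul_conj, Complex.normSq_eq_norm_sq,
    hc_norm]
  norm_num

private lemma rho_mul (c : G → G → ℂ) (hc_norm : ∀ g h : G, ‖c g h‖ = 1)
    (hc_proj : ∀ g h : G, f (g * h) = c g h • (f g * f h)) (g h : G) :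
    rho f (g * h) =
      Matrix.of fun p q => (f g * f h) p.1 p.2 * star ((f g * f h) q.1 q.2) := by
  have hc1 := phase_cancel c hc_norm g h
  funext p q
  simp only [rho, hc_proj g h, Matrix.smul_apply, smul_eq_mul, star_mul', Matrix.of_apply]
  linear_combination ((f g * f h) p.1 p.2 * star ((f g * f h) q.1 q.2)) * hc1

private lemma Amat_conj_rho (c : G → G → ℂ) (hc_norm : ∀ g h : G, ‖c g h‖ = 1)
    (hc_proj : ∀ g h : G, f (g * h) = c g h • (f g * f h)) (g h : G) :
    Amat f g * rho f h * (Amat f g)ᴴ = rho f (g * h) := by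
  have h0 : rho f h = Matrix.of fun p q =>
      (fun p : Fin d × Fin d => f h p.1 p.2) p *
        star ((fun p : Fin d × Fin d => f h p.1 p.2) q) := rfl
  rw [h0, conj_vecMulVec, rho_mul c hc_norm hc_proj g h, Amat_mulVec]

end GroupHelpers

/-- `M_T` is a covariant GPOVM exactly when `Tr (T ρμ) = 1`. -/
theorem MT_isCovariantGPOVM_iff
    {G : Type} [Group G] [TopologicalSpace G] [IsTopologicalGroup G]
    [CompactSpace G] [T2Space G] [MeasurableSpace G] [BorelSpace G]
    (μ : Measure G) [μ.IsHaarMeasure] [IsProbabilityMeasure μ]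
    {d : ℕ} (hd : 0 < d) (f : G → Matrix (Fin d) (Fin d) ℂ)
    (hf_cont : Continuous f) (hf_one : f 1 = 1)
    (hf_unitary : ∀ g : G, f g ∈ Matrix.unitaryGroup (Fin d) ℂ)
    (c : G → G → ℂ) (hc_norm : ∀ g h : G, ‖c g h‖ = 1)
    (hc_proj : ∀ g h : G, f (g * h) = c g h • (f g * f h))
    (T : Matrix (Fin d × Fin d) (Fin d × Fin d) ℂ) (hT : T.PosSemidef) :
    MT μ f T ∅ = 0 ∧
    (∀ B : Set G, MeasurableSet B → (MT μ f T B).PosSemidef) ∧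
    (∀ B : ℕ → Set G, (∀ j, MeasurableSet (B j)) → Pairwise (Function.onFun Disjoint B) →
      MT μ f T (⋃ j, B j) = ∑' j, MT μ f T (B j)) ∧
    (∀ (g : G) (B : Set G), MeasurableSet B →
      MT μ f T ((g * ·) '' B) = Amat f g * MT μ f T B * (Amat f g)ᴴ) ∧
    (MT μ f T Set.univ * rhoMu μ f).trace = (T * rhoMu μ f).trace ∧
    ((IsGPOVM μ f (MT μ f T) ∧ IsCovariant f (MT μ f T)) ↔ (T * rhoMu μ f).trace = 1) := by
  classical
  have hAc : Continuous (Amat f) := Amat_continuous hf_cont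
  set F : G → Matrix (Fin d × Fin d) (Fin d × Fin d) ℂ :=
    fun g => Amat f g * T * (Amat f g)ᴴ with hFdef
  have hFc : Continuous F :=
    (hAc.matrix_mul continuous_const).matrix_mul hAc.matrix_conjTranspose
  have hFint : ∀ p q, Integrable (fun g => F g p q) μ := fun p q =>
    integrableOn_univ.mp
      ((hFc.matrix_elem p q).continuousOn.integrableOn_compact isCompact_univ)
  have hrhoint : ∀ p q, Integrable (fun g => rho f g p q) μ := fun p q =>
    integrableOn_univ.mp
      (((rho_continuous hf_cont).matrix_elem p q).continuousOn.integrableOn_compact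
        isCompact_univ)
  have hFpsd : ∀ g, (F g).PosSemidef := fun g => hT.mul_mul_conjTranspose_same _
  have hMT : ∀ B : Set G, MT μ f T B = Matrix.of fun p q => ∫ g, F g p q ∂(μ.restrict B) :=
    fun B => rfl
  -- (1) empty set
  have hempty : MT μ f T ∅ = 0 := by
    funext p q
    simp [MT]
  -- (2) positive semidefinite
  have hpsd : ∀ B : Set G, MeasurableSet B → (MT μ f T B).PosSemidef := by
    intro B _
    refine Matrix.posSemidef_iff_dotProduct_mulVec.mpr ⟨?_, ?_⟩
    · funext p q
      show star (MT μ f T B q p) = MT μ f T B p q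
      calc star (∫ g in B, F g q p ∂μ) = ∫ g in B, star (F g q p) ∂μ := integral_conj.symm
        _ = ∫ g in B, F g p q ∂μ := by
            refine integral_congr_ae (Filter.Eventually.of_forall fun g => ?_)
            have := (hFpsd g).1
            calc star (F g q p) = (F g)ᴴ p q := rfl
              _ = F g p q := by rw [this]
    · intro x
      rw [hMT B, dotProduct_intMatrix _ _ (fun p q => (hFint p q).restrict)]
      exact integral_nonneg_complex _ _ fun g => (hFpsd g).dotProduct_mulVec_nonneg x
  -- (3) countable additivity
  have hadd : ∀ B : ℕ → Set G, (∀ j, MeasurableSet (B j)) → Pairwise (Function.onFun Disjoint B) →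
      MT μ f T (⋃ j, B j) = ∑' j, MT μ f T (B j) := by
    intro B hB hdis
    have key : HasSum (fun j => MT μ f T (B j)) (MT μ f T (⋃ j, B j)) := by
      refine Pi.hasSum.mpr ?_
      intro p
      refine Pi.hasSum.mpr ?_
      intro q
      exact hasSum_integral_iUnion hB hdis ((hFint p q).integrableOn)
    exact key.tsum_eq.symm
  -- (4) covariance
  have hcovF : ∀ g h : G, F (g * h) = Amat f g * F h * (Amat f g)ᴴ := by
    intro g h
    have hc1 := phase_cancel c hc_norm g h
    show Amat f (g * h) * T * (Amat f (g * h))ᴴ = _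
    rw [Amat_mul f c hc_proj g h, Matrix.conjTranspose_smul]
    simp only [smul_mul_assoc, mul_smul_comm, smul_smul]
    rw [mul_comm (star (c g h)), hc1, one_smul, Matrix.conjTranspose_mul]
    simp only [hFdef, Matrix.mul_assoc]
  have hcov : ∀ (g : G) (B : Set G), MeasurableSet B →
      MT μ f T ((g * ·) '' B) = Amat f g * MT μ f T B * (Amat f g)ᴴ := by
    intro g B _
    have hemb : MeasurableEmbedding (fun x => g * x) :=
      (MeasurableEquiv.mulLeft g).measurableEmbedding
    calc MT μ f T ((g * ·) '' B)
        = Matrix.of fun p q => ∫ h in B, F (g * h) p q ∂μ := by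
          funext p q
          exact (measurePreserving_mul_left μ g).setIntegral_image_emb hemb _ B
      _ = Matrix.of fun p q => ∫ h in B, (Amat f g * F h * (Amat f g)ᴴ) p q ∂μ := by
          simp only [hcovF]
      _ = Amat f g * MT μ f T B * (Amat f g)ᴴ := by
          rw [hMT B, mul_intMatrix_mul _ _ (fun p q => (hFint p q).restrict)]
  -- invariance of rhoMu
  have hrho_inv : ∀ g : G, Amat f g * rhoMu μ f * (Amat f g)ᴴ = rhoMu μ f := by
    intro g
    have h1 : rhoMu μ f = Matrix.of fun p q => ∫ h, rho f h p q ∂μ := rfl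
    rw [h1, mul_intMatrix_mul _ _ hrhoint]
    funext p q
    simp only [Matrix.of_apply]
    calc ∫ h, (Amat f g * rho f h * (Amat f g)ᴴ) p q ∂μ
        = ∫ h, rho f (g * h) p q ∂μ := by
          simp only [Amat_conj_rho c hc_norm hc_proj]
      _ = ∫ h, rho f h p q ∂μ := integral_mul_left_eq_self (fun h => rho f h p q) g
  have hrho_inv' : ∀ g : G, (Amat f g)ᴴ * rhoMu μ f * Amat f g = rhoMu μ f := by
    intro g
    obtain ⟨hu1, _⟩ := Amat_unitary f hf_unitary g
    calc (Amat f g)ᴴ * rhoMu μ f * Amat f g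
        = (Amat f g)ᴴ * (Amat f g * rhoMu μ f * (Amat f g)ᴴ) * Amat f g := by
          rw [hrho_inv g]
      _ = (Amat f g)ᴴ * Amat f g * rhoMu μ f * ((Amat f g)ᴴ * Amat f g) := by
          simp only [Matrix.mul_assoc]
      _ = rhoMu μ f := by rw [hu1, Matrix.mul_one, Matrix.one_mul]
  -- (5) trace
  have htrace : (MT μ f T Set.univ * rhoMu μ f).trace = (T * rhoMu μ f).trace := by
    have h1 : MT μ f T Set.univ = Matrix.of fun p q => ∫ g, F g p q ∂μ := by
      funext p q
      show ∫ g in Set.univ, F g p q ∂μ = ∫ g, F g p q ∂μ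
      rw [Measure.restrict_univ]
    rw [h1, trace_intMatrix_mul _ _ hFint]
    have h2 : ∀ g : G, (F g * rhoMu μ f).trace = (T * rhoMu μ f).trace := by
      intro g
      have e1 : F g * rhoMu μ f = Amat f g * (T * ((Amat f g)ᴴ * rhoMu μ f)) := by
        simp only [hFdef, Matrix.mul_assoc]
      have e2 : T * ((Amat f g)ᴴ * rhoMu μ f) * Amat f g =
          T * ((Amat f g)ᴴ * rhoMu μ f * Amat f g) := by
        simp only [Matrix.mul_assoc]
      rw [e1, Matrix.trace_mul_comm, e2, hrho_inv' g]
    simp only [h2]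
    simp [measure_univ]
  refine ⟨hempty, hpsd, hadd, hcov, htrace, ?_⟩
  constructor
  · rintro ⟨⟨_, htr⟩, _⟩
    rw [← htrace]
    exact htr
  · intro h1
    exact ⟨⟨⟨hpsd, hempty, hadd⟩, htrace.trans h1⟩, fun g B hB => hcov g B hB⟩


end GroupEstimation
end
end

section
/- (Equation (BNZ2)) For every GPOVM M and every g : G, the Bayes risk is invariant under twisting: D_bayes (M_g) = D_bayes M. -/
open MeasureTheory
open scoped Kronecker Matrix ComplexOrder

noncomputable section

namespace GroupEstimation

variable {G : Type} [Group G] [TopologicalSpace G] [IsTopologicalGroup G]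
  [CompactSpace G] [T2Space G] [MeasurableSpace G] [BorelSpace G]

/-- Auxiliary: conjugate transpose of a Kronecker product. -/
lemma kron_conjTranspose {l m n p : Type*} (A : Matrix l m ℂ) (B : Matrix n p ℂ) :
    (A ⊗ₖ B)ᴴ = Aᴴ ⊗ₖ Bᴴ := by
  ext ⟨i, j⟩ ⟨k, l⟩
  simp [Matrix.conjTranspose_apply, Matrix.kroneckerMap_apply, star_mul', mul_comm]

lemma amat_mul_conjTranspose {d : ℕ} (f : G → Matrix (Fin d) (Fin d) ℂ)
    (hf_unitary : ∀ g : G, f g ∈ Matrix.unitaryGroup (Fin d) ℂ) (g : G) :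
    Amat f g * (Amat f g)ᴴ = 1 := by
  rw [Amat, kron_conjTranspose, Matrix.conjTranspose_one, ← Matrix.mul_kronecker_mul,
    one_mul]
  have := (hf_unitary g).2
  rw [Matrix.star_eq_conjTranspose] at this
  rw [this, Matrix.one_kronecker_one]

lemma amat_conjTranspose_mul {d : ℕ} (f : G → Matrix (Fin d) (Fin d) ℂ)
    (hf_unitary : ∀ g : G, f g ∈ Matrix.unitaryGroup (Fin d) ℂ) (g : G) :
    (Amat f g)ᴴ * Amat f g = 1 := by
  rw [Amat, kron_conjTranspose, Matrix.conjTranspose_one, ← Matrix.mul_kronecker_mul,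
    one_mul]
  have := (hf_unitary g).1
  rw [Matrix.star_eq_conjTranspose] at this
  rw [this, Matrix.one_kronecker_one]

/-- Key covariance identity: `A g · ρ h · (A g)ᴴ = ρ (g h)`. -/
lemma amat_rho_conj {d : ℕ} (f : G → Matrix (Fin d) (Fin d) ℂ)
    (c : G → G → ℂ) (hc_norm : ∀ g h : G, ‖c g h‖ = 1)
    (hc_proj : ∀ g h : G, f (g * h) = c g h • (f g * f h)) (g h : G) :
    Amat f g * rho f h * (Amat f g)ᴴ = rho f (g * h) := by
  have hc : c g h * star (c g h) = 1 := by
    rw [Complex.star_def, Complex.mul_conj]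
    norm_cast
    simp [Complex.normSq_eq_norm_sq, hc_norm]
  ext p q
  simp only [rho, Amat, Matrix.mul_apply, Matrix.conjTranspose_apply,
    Matrix.kroneckerMap_apply, Matrix.one_apply, hc_proj, Matrix.smul_apply, smul_eq_mul,
    Fintype.sum_prod_type, mul_ite, ite_mul, mul_zero, zero_mul, mul_one, one_mul,
    apply_ite (star : ℂ → ℂ), star_zero, star_mul', star_one,
    Finset.sum_ite_eq', Finset.sum_ite_eq, Finset.mem_univ, if_true]
  rw [mul_mul_mul_comm, hc, one_mul, star_sum]
  simp_rw [Finset.sum_mul, Finset.mul_sum]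
  rw [Finset.sum_comm]
  refine Finset.sum_congr rfl fun x _ => Finset.sum_congr rfl fun y _ => ?_
  simp only [star_mul']
  ring

/-- Conjugation commutes with `tsum` (for an invertible conjugating matrix). -/
lemma conj_tsum {n : Type*} [Fintype n] [DecidableEq n] (A : Matrix n n ℂ)
    (hA : A * Aᴴ = 1) (X : ℕ → Matrix n n ℂ) :
    Aᴴ * (∑' j, X j) * A = ∑' j, Aᴴ * X j * A := by
  let L : Matrix n n ℂ →L[ℂ] Matrix n n ℂ :=
    LinearMap.toContinuousLinearMap
      ((LinearMap.mulRight ℂ A).comp (LinearMap.mulLeft ℂ Aᴴ))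
  let L' : Matrix n n ℂ →L[ℂ] Matrix n n ℂ :=
    LinearMap.toContinuousLinearMap
      ((LinearMap.mulRight ℂ Aᴴ).comp (LinearMap.mulLeft ℂ A))
  have hL : ∀ Y, L Y = Aᴴ * Y * A := fun Y => rfl
  have hL' : ∀ Y, L' Y = A * Y * Aᴴ := fun Y => rfl
  by_cases hs : Summable X
  · have := L.map_tsum hs
    simpa only [hL] using this
  · rw [tsum_eq_zero_of_not_summable hs, tsum_eq_zero_of_not_summable, mul_zero, zero_mul]
    intro hs2
    apply hs
    have h2 : Summable fun j => L' (Aᴴ * X j * A) :=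
      hs2.map L'.toLinearMap.toAddMonoidHom L'.continuous
    have hid : ∀ Y : Matrix n n ℂ, A * (Aᴴ * Y * A) * Aᴴ = Y := by
      intro Y
      simp only [← mul_assoc]
      rw [hA, one_mul, mul_assoc, hA, mul_one]
    simpa only [hL', hid] using h2

lemma measurableSet_smul_image (g : G) {B : Set G} (hB : MeasurableSet B) :
    MeasurableSet ((g * ·) '' B) := by
  have : (g * ·) '' B = (fun x => g⁻¹ * x) ⁻¹' B := by
    ext x
    constructor
    · rintro ⟨b, hb, rfl⟩; simpa using hb
    · intro hx; exact ⟨g⁻¹ * x, hx, by group⟩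
  rw [this]
  exact (measurable_const_mul g⁻¹) hB

lemma twist_isPreGPOVM {d : ℕ} (f : G → Matrix (Fin d) (Fin d) ℂ)
    (hf_unitary : ∀ g : G, f g ∈ Matrix.unitaryGroup (Fin d) ℂ)
    (M : Set G → Matrix (Fin d × Fin d) (Fin d × Fin d) ℂ)
    (hM : IsPreGPOVM M) (g : G) : IsPreGPOVM (twist f M g) := by
  obtain ⟨hpos, hempty, hadd⟩ := hM
  refine ⟨fun B hB => ?_, ?_, fun B hB hdisj => ?_⟩
  · exact (hpos _ (measurableSet_smul_image g hB)).conjTranspose_mul_mul_same (Amat f g)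
  · simp [twist, hempty]
  · have himg : ((g * ·) '' ⋃ j, B j) = ⋃ j, (g * ·) '' (B j) := Set.image_iUnion
    rw [twist, himg, hadd (fun j => (g * ·) '' (B j))
      (fun j => measurableSet_smul_image g (hB j))
      (fun i j hij => (Set.disjoint_image_iff (mul_right_injective g)).2 (hdisj hij))]
    exact conj_tsum (Amat f g) (amat_mul_conjTranspose f hf_unitary g) _

/-- Equation (BNZ2): the Bayes risk is invariant under twisting. -/
theorem Dbayes_twist
    {G : Type} [Group G] [TopologicalSpace G] [IsTopologicalGroup G]
    [CompactSpace G] [T2Space G] [MeasurableSpace G] [BorelSpace G]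
    (μ : Measure G) [μ.IsHaarMeasure] [IsProbabilityMeasure μ]
    {d : ℕ} (hd : 0 < d) (f : G → Matrix (Fin d) (Fin d) ℂ)
    (hf_cont : Continuous f) (hf_one : f 1 = 1)
    (hf_unitary : ∀ g : G, f g ∈ Matrix.unitaryGroup (Fin d) ℂ)
    (c : G → G → ℂ) (hc_norm : ∀ g h : G, ‖c g h‖ = 1)
    (hc_proj : ∀ g h : G, f (g * h) = c g h • (f g * f h))
    (w : G → G → ℝ) (hw_cont : Continuous fun p : G × G => w p.1 p.2)
    (hw_bdd : ∃ C : ℝ, ∀ g gh : G, |w g gh| ≤ C)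
    (hw_cov : ∀ g gh g' : G, w (g' * g) (g' * gh) = w g gh)
    (ν : (Set G → Matrix (Fin d × Fin d) (Fin d × Fin d) ℂ) → G → Measure G)
    (hν : ∀ M : Set G → Matrix (Fin d × Fin d) (Fin d × Fin d) ℂ, IsPreGPOVM M →
      ∀ (g : G) (B : Set G), MeasurableSet B →
        ν M g B = ENNReal.ofReal ((M B * rho f g).trace).re)
    (M : Set G → Matrix (Fin d × Fin d) (Fin d × Fin d) ℂ)
    (hM : IsGPOVM μ f M) (g : G) :
    Dbayes μ w ν (twist f M g) = Dbayes μ w ν M := by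
  obtain ⟨hpre, _⟩ := hM
  have hpre' := twist_isPreGPOVM f hf_unitary M hpre g
  -- the twisted outcome measure is the pushforward of the shifted one
  have hmeas : ∀ h : G, ν (twist f M g) h
      = Measure.map (fun x => g⁻¹ * x) (ν M (g * h)) := by
    intro h
    refine Measure.ext fun s hs => ?_
    rw [Measure.map_apply (measurable_const_mul g⁻¹) hs]
    have hpre_img : (fun x => g⁻¹ * x) ⁻¹' s = (g * ·) '' s := by
      ext x
      constructor
      · intro hx; exact ⟨g⁻¹ * x, hx, by group⟩
      · rintro ⟨b, hb, rfl⟩; simpa using hb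
    rw [hpre_img, hν _ hpre' h s hs, hν _ hpre (g * h) _ (measurableSet_smul_image g hs)]
    congr 2
    rw [twist, mul_assoc ((Amat f g)ᴴ * M ((g * ·) '' s)), mul_assoc ((Amat f g)ᴴ),
      Matrix.trace_mul_comm, mul_assoc, amat_rho_conj f c hc_norm hc_proj g h]
  have hDpt : ∀ h : G, Dpt w ν (twist f M g) h = Dpt w ν M (g * h) := by
    intro h
    rw [Dpt, Dpt, hmeas h]
    have hwm : AEStronglyMeasurable (fun x => w h x)
        (Measure.map (fun x => g⁻¹ * x) (ν M (g * h))) :=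
      Continuous.aestronglyMeasurable
        (show Continuous fun x => w h x from
          hw_cont.comp (continuous_const.prodMk continuous_id))
    rw [integral_map (measurable_const_mul g⁻¹).aemeasurable hwm]
    congr 1
    funext x
    have := hw_cov h (g⁻¹ * x) g
    rw [mul_inv_cancel_left] at this
    exact this.symm
  rw [Dbayes, Dbayes]
  calc (∫ h, Dpt w ν (twist f M g) h ∂μ) = ∫ h, Dpt w ν M (g * h) ∂μ := by
        exact integral_congr_ae (Filter.Eventually.of_forall hDpt)
    _ = ∫ h, Dpt w ν M h ∂μ := integral_mul_left_eq_self (Dpt w ν M) g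


end GroupEstimation
end
end

section
/- If M is a covariant GPOVM then the pointwise risk is constant: D_pt M g = D_pt M 1 for every g : G; consequently D_max M = D_bayes M. -/
open MeasureTheory
open scoped Kronecker Matrix ComplexOrder

noncomputable section

namespace GroupEstimation

variable {G : Type} [Group G] [TopologicalSpace G] [IsTopologicalGroup G]
  [CompactSpace G] [T2Space G] [MeasurableSpace G] [BorelSpace G]

/-- For a covariant GPOVM the pointwise risk is constant, hence minimax = Bayes. -/
theorem Dpt_const_of_covariant
    {G : Type} [Group G] [TopologicalSpace G] [IsTopologicalGroup G]
    [CompactSpace G] [T2Space G] [MeasurableSpace G] [BorelSpace G]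
    (μ : Measure G) [μ.IsHaarMeasure] [IsProbabilityMeasure μ]
    {d : ℕ} (hd : 0 < d) (f : G → Matrix (Fin d) (Fin d) ℂ)
    (hf_cont : Continuous f) (hf_one : f 1 = 1)
    (hf_unitary : ∀ g : G, f g ∈ Matrix.unitaryGroup (Fin d) ℂ)
    (c : G → G → ℂ) (hc_norm : ∀ g h : G, ‖c g h‖ = 1)
    (hc_proj : ∀ g h : G, f (g * h) = c g h • (f g * f h))
    (w : G → G → ℝ) (hw_cont : Continuous fun p : G × G => w p.1 p.2)
    (hw_bdd : ∃ C : ℝ, ∀ g gh : G, |w g gh| ≤ C)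
    (hw_cov : ∀ g gh g' : G, w (g' * g) (g' * gh) = w g gh)
    (ν : (Set G → Matrix (Fin d × Fin d) (Fin d × Fin d) ℂ) → G → Measure G)
    (hν : ∀ M : Set G → Matrix (Fin d × Fin d) (Fin d × Fin d) ℂ, IsPreGPOVM M →
      ∀ (g : G) (B : Set G), MeasurableSet B →
        ν M g B = ENNReal.ofReal ((M B * rho f g).trace).re)
    (M : Set G → Matrix (Fin d × Fin d) (Fin d × Fin d) ℂ)
    (hM : IsGPOVM μ f M) (hMcov : IsCovariant f M) :
    (∀ g : G, Dpt w ν M g = Dpt w ν M 1) ∧ Dmax w ν M = Dbayes μ w ν M := by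

  -- A g is unitary
  have hA : ∀ g : G, (Amat f g)ᴴ * Amat f g = 1 := by
    intro g
    have h : (Amat f g)ᴴ = (f g)ᴴ ⊗ₖ (1 : Matrix (Fin d) (Fin d) ℂ) := by
      ext p q
      simp [Amat, Matrix.conjTranspose_apply, Matrix.kroneckerMap_apply,
        Matrix.one_apply, apply_ite, eq_comm]
      split_ifs with hh <;> simp_all
    have h2 : (f g)ᴴ * f g = 1 := Matrix.mem_unitaryGroup_iff'.mp (hf_unitary g)
    rw [h, Amat, ← Matrix.mul_kronecker_mul, Matrix.one_mul, h2, Matrix.one_kronecker_one]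
  -- rho transforms covariantly
  have hrho : ∀ g : G, rho f g = Amat f g * rho f 1 * (Amat f g)ᴴ := by
    intro g
    ext p q
    simp [rho, Amat, Matrix.mul_apply, Matrix.kroneckerMap_apply, hf_one,
      Matrix.one_apply, Fintype.sum_prod_type, Matrix.conjTranspose_apply, apply_ite,
      Finset.sum_ite_eq, Finset.sum_ite_eq']
  -- trace identity
  have htr : ∀ (g : G) (B : Set G), MeasurableSet B →
      (M ((g * ·) '' B) * rho f g).trace = (M B * rho f 1).trace := by
    intro g B hB
    rw [hMcov g B hB, hrho g]
    simp only [Matrix.mul_assoc]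
    rw [Matrix.trace_mul_comm]
    simp only [Matrix.mul_assoc]
    rw [hA g, Matrix.mul_one, ← Matrix.mul_assoc (Amat f g)ᴴ, hA g, Matrix.one_mul]
  have hmeasmul : ∀ g : G, Measurable (g * ·) := fun g => measurable_const_mul g
  -- the output measure transforms by translation
  have hνmap : ∀ g : G, ν M g = Measure.map (g * ·) (ν M 1) := by
    intro g
    refine Measure.ext fun B hB => ?_
    rw [Measure.map_apply (hmeasmul g) hB, hν M hM.1 g B hB,
      hν M hM.1 1 _ (hB.preimage (hmeasmul g))]
    have himg : (g * ·) '' ((g * ·) ⁻¹' B) = B :=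
      Set.image_preimage_eq B (fun y => ⟨g⁻¹ * y, by simp⟩)
    rw [← htr g _ (hB.preimage (hmeasmul g)), himg]
  -- pointwise risk is constant
  have hDpt : ∀ g : G, Dpt w ν M g = Dpt w ν M 1 := by
    intro g
    have hwc : Continuous fun gh => w g gh :=
      hw_cont.comp (continuous_const.prodMk continuous_id)
    unfold Dpt
    rw [hνmap g, integral_map (hmeasmul g).aemeasurable hwc.aestronglyMeasurable]
    have hrw : ∀ gh : G, w g (g * gh) = w 1 gh := fun gh => by
      simpa using hw_cov 1 gh g
    simp_rw [hrw]
  refine ⟨hDpt, ?_⟩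
  rw [Dmax, Dbayes]
  simp only [hDpt]
  rw [ciSup_const, integral_const, probReal_univ]
  simp


end GroupEstimation
end
end
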